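/- Let Q be an n×n real matrix with positive definite quadratic form, written as Q = S + A with S symmetric positive definite and A antisymmetric. If S is diagonal with diagonal entries λ₁,...,λₙ, then the coefficient of the terms in det(Q) containing exactly n−2 of the λᵢ equals Σ_{i<j} a_{ij}² λ₁···λ̂ᵢ···λ̂ⱼ···λₙ, which is nonnegative and strictly positive unless A = 0. -/
import Mathlib


open Matrix Polynomial Finset

/-- Write `Q = S + A` with `S = diag(λ)`, `λᵢ > 0`, and `A` antisymmetric. The terms in
`det Q` containing exactly `n−2` of the `λᵢ` (i.e. the coefficient of `X²` in
`det(diag λ + X·A)`) equal `∑_{i<j} a_{ij}² λ₁···λ̂ᵢ···λ̂ⱼ···λₙ`, which is nonnegative and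
strictly positive unless `A = 0`. -/
theorem stmt1 (n : ℕ) (l : Fin n → ℝ) (hl : ∀ i, 0 < l i)
    (A : Matrix (Fin n) (Fin n) ℝ) (hA : Aᵀ = -A) :
    (((Matrix.diagonal l).map Polynomial.C +
        (Polynomial.X : ℝ[X]) • A.map Polynomial.C).det).coeff 2 =
      ∑ i, ∑ j ∈ Finset.Ioi i, (A i j) ^ 2 * ∏ k ∈ Finset.univ \ {i, j}, l k ∧
    0 ≤ ∑ i, ∑ j ∈ Finset.Ioi i, (A i j) ^ 2 * ∏ k ∈ Finset.univ \ {i, j}, l k ∧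
    (A ≠ 0 → 0 < ∑ i, ∑ j ∈ Finset.Ioi i, (A i j) ^ 2 * ∏ k ∈ Finset.univ \ {i, j}, l k) := by
  have hskew : ∀ i j, A j i = - A i j := by
    intro i j
    have h := congrFun (congrFun hA i) j
    simpa [Matrix.transpose_apply] using h
  have hAdiag : ∀ i, A i i = 0 := by
    intro i
    have := hskew i i
    linarith
  -- the inner permutation sum for a fixed pair `i ≠ j`
  have inner : ∀ i j : Fin n, i ≠ j →
      (∑ σ : Equiv.Perm (Fin n), (Equiv.Perm.sign σ : ℤ) •
          ((∏ k ∈ ({i, j} : Finset (Fin n)), A (σ k) k) *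
           ∏ k ∈ Finset.univ \ {i, j}, Matrix.diagonal l (σ k) k)) =
        (A i j) ^ 2 * ∏ k ∈ Finset.univ \ {i, j}, l k := by
    intro i j hij
    have hsub : ({1, Equiv.swap i j} : Finset (Equiv.Perm (Fin n))) ⊆ Finset.univ :=
      Finset.subset_univ _
    rw [← Finset.sum_subset hsub ?h0]
    · have hne : (1 : Equiv.Perm (Fin n)) ≠ Equiv.swap i j := by
        intro h
        have : (1 : Equiv.Perm (Fin n)) i = Equiv.swap i j i := by rw [h]
        simp [Equiv.swap_apply_left] at this
        exact hij this
      rw [Finset.sum_pair hne]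
      have h1 : (∏ k ∈ ({i, j} : Finset (Fin n)), A ((1 : Equiv.Perm (Fin n)) k) k) = 0 := by
        rw [Finset.prod_pair hij]
        simp [hAdiag]
      have h2 : (∏ k ∈ ({i, j} : Finset (Fin n)), A ((Equiv.swap i j) k) k) = -(A i j)^2 := by
        rw [Finset.prod_pair hij, Equiv.swap_apply_left, Equiv.swap_apply_right, hskew i j]
        ring
      have h3 : (∏ k ∈ Finset.univ \ {i, j}, Matrix.diagonal l ((Equiv.swap i j) k) k)
          = ∏ k ∈ Finset.univ \ {i, j}, l k := by
        refine Finset.prod_congr rfl fun k hk => ?_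
        simp only [Finset.mem_sdiff, Finset.mem_insert, Finset.mem_singleton, not_or] at hk
        rw [Equiv.swap_apply_of_ne_of_ne hk.2.1 hk.2.2, Matrix.diagonal_apply_eq]
      rw [h1, h2, h3, Equiv.Perm.sign_swap hij]
      simp
    · intro σ _ hσ
      simp only [Finset.mem_insert, Finset.mem_singleton, not_or] at hσ
      have hmove : ∃ k, k ∉ ({i, j} : Finset (Fin n)) ∧ σ k ≠ k := by
        by_contra hcon
        push_neg at hcon
        have hfix : ∀ k, k ∉ ({i, j} : Finset (Fin n)) → σ k = k := hcon
        have hi : σ i = i ∨ σ i = j := by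
          by_contra h
          push_neg at h
          have h1 : σ i ∉ ({i, j} : Finset (Fin n)) := by
            simp [h.1, h.2]
          have := hfix _ h1
          exact h.1 (σ.injective this)
        have hj : σ j = i ∨ σ j = j := by
          by_contra h
          push_neg at h
          have h1 : σ j ∉ ({i, j} : Finset (Fin n)) := by
            simp [h.1, h.2]
          have := hfix _ h1
          exact h.2 (σ.injective this)
        rcases hi with hi | hi
        · have hjj : σ j = j := by
            rcases hj with hj | hj
            · exact absurd (σ.injective (hi.trans hj.symm)) hij
            · exact hj
          exact hσ.1 (Equiv.ext fun k => by
            by_cases hk : k ∈ ({i, j} : Finset (Fin n))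
            · simp only [Finset.mem_insert, Finset.mem_singleton] at hk
              rcases hk with rfl | rfl <;> simpa [hi, hjj]
            · simpa using hfix k hk)
        · have hjj : σ j = i := by
            rcases hj with hj | hj
            · exact hj
            · exact absurd (σ.injective (hi.trans hj.symm)) hij
          exact hσ.2 (Equiv.ext fun k => by
            by_cases hk : k ∈ ({i, j} : Finset (Fin n))
            · simp only [Finset.mem_insert, Finset.mem_singleton] at hk
              rcases hk with rfl | rfl
              · simp [hi, Equiv.swap_apply_left]
              · simp [hjj, Equiv.swap_apply_right]
            · simp only [Finset.mem_insert, Finset.mem_singleton, not_or] at hk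
              simp [hfix k (by simp [hk]), Equiv.swap_apply_of_ne_of_ne hk.1 hk.2])
      obtain ⟨k, hk, hmk⟩ := hmove
      have hz : (∏ k ∈ Finset.univ \ ({i, j} : Finset (Fin n)), Matrix.diagonal l (σ k) k) = 0 :=
        Finset.prod_eq_zero (Finset.mem_sdiff.mpr ⟨Finset.mem_univ k, hk⟩)
          (Matrix.diagonal_apply_ne l hmk)
      rw [hz]
      simp
  -- extraction of the `X²` coefficient
  have hcoeff : (((Matrix.diagonal l).map Polynomial.C +
        (Polynomial.X : ℝ[X]) • A.map Polynomial.C).det).coeff 2 =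
      ∑ σ : Equiv.Perm (Fin n), (Equiv.Perm.sign σ : ℤ) •
        ∑ t ∈ Finset.univ.powerset.filter (fun t : Finset (Fin n) => t.card = 2),
          (∏ k ∈ t, A (σ k) k) * ∏ k ∈ Finset.univ \ t, Matrix.diagonal l (σ k) k := by
    rw [Matrix.det_apply, Polynomial.finset_sum_coeff]
    refine Finset.sum_congr rfl fun σ _ => ?_
    rw [Polynomial.coeff_smul]
    congr 1
    have h1 : ∏ i, ((Matrix.diagonal l).map C + (X:ℝ[X]) • A.map C) (σ i) i
        = ∑ t ∈ (Finset.univ : Finset (Fin n)).powerset,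
            (∏ k ∈ t, (X * C (A (σ k) k))) * ∏ k ∈ Finset.univ \ t, C (Matrix.diagonal l (σ k) k) := by
      rw [← Finset.prod_add]
      refine Finset.prod_congr rfl fun i _ => ?_
      simp only [Matrix.add_apply, Matrix.map_apply, Matrix.smul_apply, smul_eq_mul]
      rw [add_comm, mul_comm]
    rw [h1, Polynomial.finset_sum_coeff, Finset.sum_filter]
    refine Finset.sum_congr rfl fun t _ => ?_
    rw [Finset.prod_mul_distrib, Finset.prod_const, ← map_prod, ← map_prod, mul_assoc, ← C_mul,
      mul_comm (X ^ t.card), C_mul_X_pow_eq_monomial, Polynomial.coeff_monomial]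
  -- reindexing two-element subsets by ordered pairs
  have hreindex : ∀ G : Finset (Fin n) → ℝ,
      ∑ t ∈ Finset.univ.powerset.filter (fun t : Finset (Fin n) => t.card = 2), G t
        = ∑ i, ∑ j ∈ Finset.Ioi i, G {i, j} := by
    intro G
    rw [show (∑ i, ∑ j ∈ Finset.Ioi i, G {i, j})
        = ∑ x ∈ (Finset.univ : Finset (Fin n)).sigma (fun i => Finset.Ioi i), G {x.1, x.2} from
      (Finset.sum_sigma Finset.univ (fun i => Finset.Ioi i) (fun x => G {x.1, x.2})).symm]
    refine (Finset.sum_bij (fun x _ => ({x.1, x.2} : Finset (Fin n))) ?_ ?_ ?_ ?_).symm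
    · rintro ⟨a, b⟩ hx
      simp only [Finset.mem_sigma, Finset.mem_univ, Finset.mem_Ioi, true_and] at hx
      simp [Finset.mem_filter, Finset.card_insert_of_notMem, Finset.mem_singleton,
        (hx.ne : a ≠ b), Finset.card_pair (hx.ne : a ≠ b)]
    · rintro ⟨a, b⟩ ha ⟨c, d⟩ hc h
      simp only at h
      simp only [Finset.mem_sigma, Finset.mem_univ, Finset.mem_Ioi, true_and] at ha hc
      have hab : a < b := ha
      have hcd : c < d := hc
      have h1 : a ∈ ({c, d} : Finset (Fin n)) := by rw [← h]; simp
      have h2 : b ∈ ({c, d} : Finset (Fin n)) := by rw [← h]; simp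
      have h3 : c ∈ ({a, b} : Finset (Fin n)) := by rw [h]; simp
      simp only [Finset.mem_insert, Finset.mem_singleton] at h1 h2 h3
      have hac : a = c := by
        rcases h1 with h1 | h1
        · exact h1
        · exfalso
          subst h1
          rcases h3 with h3 | h3
          · subst h3; exact lt_irrefl _ hcd
          · subst h3; exact lt_irrefl _ (hab.trans hcd)
      subst hac
      have hbd : b = d := by
        rcases h2 with h2 | h2
        · exact absurd hab (by simp [h2])
        · exact h2
      simp [hbd]
    · intro t ht
      simp only [Finset.mem_filter, Finset.mem_powerset] at ht
      obtain ⟨a, b, hab, rfl⟩ := Finset.card_eq_two.mp ht.2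
      rcases lt_or_gt_of_ne hab with h | h
      · exact ⟨⟨a, b⟩, by simp [Finset.mem_sigma, Finset.mem_Ioi, h], rfl⟩
      · exact ⟨⟨b, a⟩, by simp [Finset.mem_sigma, Finset.mem_Ioi, h], by simp [Finset.pair_comm]⟩
    · intro x hx
      rfl
  -- the main identity
  have hmain : (((Matrix.diagonal l).map Polynomial.C +
        (Polynomial.X : ℝ[X]) • A.map Polynomial.C).det).coeff 2 =
      ∑ i, ∑ j ∈ Finset.Ioi i, (A i j) ^ 2 * ∏ k ∈ Finset.univ \ {i, j}, l k := by
    rw [hcoeff]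
    have hswap : (∑ σ : Equiv.Perm (Fin n), (Equiv.Perm.sign σ : ℤ) •
          ∑ t ∈ Finset.univ.powerset.filter (fun t : Finset (Fin n) => t.card = 2),
            (∏ k ∈ t, A (σ k) k) * ∏ k ∈ Finset.univ \ t, Matrix.diagonal l (σ k) k)
        = ∑ t ∈ Finset.univ.powerset.filter (fun t : Finset (Fin n) => t.card = 2),
            ∑ σ : Equiv.Perm (Fin n), (Equiv.Perm.sign σ : ℤ) •
              ((∏ k ∈ t, A (σ k) k) * ∏ k ∈ Finset.univ \ t, Matrix.diagonal l (σ k) k) := by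
      rw [Finset.sum_comm]
      exact Finset.sum_congr rfl fun σ _ => Finset.smul_sum
    rw [hswap, hreindex]
    refine Finset.sum_congr rfl fun i _ => Finset.sum_congr rfl fun j hj => ?_
    exact inner i j (Finset.mem_Ioi.mp hj).ne
  have hnonneg : ∀ i : Fin n, ∀ j ∈ Finset.Ioi i,
      0 ≤ (A i j) ^ 2 * ∏ k ∈ Finset.univ \ {i, j}, l k :=
    fun i j _ => mul_nonneg (sq_nonneg _)
      (Finset.prod_nonneg fun k _ => (hl k).le)
  refine ⟨hmain, Finset.sum_nonneg fun i _ => Finset.sum_nonneg (hnonneg i), fun hA0 => ?_⟩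
  -- positivity when A ≠ 0
  obtain ⟨i, j, hAij⟩ : ∃ i j, A i j ≠ 0 := by
    by_contra h
    push_neg at h
    exact hA0 (by ext i j; simpa using h i j)
  have hij : i ≠ j := fun h => hAij (h ▸ hAdiag i)
  obtain ⟨a, b, hab, hAab⟩ : ∃ a b : Fin n, a < b ∧ A a b ≠ 0 := by
    rcases lt_or_gt_of_ne hij with h | h
    · exact ⟨i, j, h, hAij⟩
    · exact ⟨j, i, h, by rw [hskew]; simpa using hAij⟩
  refine Finset.sum_pos' (fun i _ => Finset.sum_nonneg (hnonneg i)) ⟨a, Finset.mem_univ a, ?_⟩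
  refine Finset.sum_pos' (hnonneg a) ⟨b, Finset.mem_Ioi.mpr hab, ?_⟩
  exact mul_pos (by positivity) (Finset.prod_pos fun k _ => hl k)
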